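/- arXiv:1205.4006 — 6 statements merged into one kernel-verified Lean document; each statement's English description precedes it below -/
import Mathlib

section
/- Let A_{ij}, for 0 ≤ i, j ≤ N, be complex d×d matrices satisfying (A_{ij})ᵀ = A_{ji} for all i, j. For nonzero λ ∈ ℂ define L(λ) = det(Σ_{i,j=0}^N λ^{j−i} A_{ij}). Then L(λ⁻¹) = L(λ) for every nonzero λ; in particular, a nonzero λ satisfies L(λ) = 0 if and only if L(λ⁻¹) = 0. -/
open Finset Matrix

/-- Spectral symmetry for Euler–Lagrange linearizations:
if `A_{ij}ᵀ = A_{ji}` and `L(λ) = det(Σ_{i,j=0}^N λ^{j−i} A_{ij})`, then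
`L(λ⁻¹) = L(λ)` for every nonzero `λ`, and in particular `L(λ) = 0 ↔ L(λ⁻¹) = 0`. -/
theorem lagrangian_spectrum_symmetry {d N : ℕ}
    (A : ℕ → ℕ → Matrix (Fin d) (Fin d) ℂ)
    (hsym : ∀ i j, (A i j)ᵀ = A j i)
    (L : ℂ → ℂ)
    (hL : ∀ lam : ℂ, L lam =
      (∑ i ∈ Finset.range (N + 1), ∑ j ∈ Finset.range (N + 1),
        lam ^ ((j : ℤ) - (i : ℤ)) • A i j).det) :
    ∀ lam : ℂ, lam ≠ 0 → (L lam⁻¹ = L lam ∧ (L lam = 0 ↔ L lam⁻¹ = 0)) := by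
  intro lam hlam
  have key : L lam⁻¹ = L lam := by
    rw [hL, hL]
    rw [← Matrix.det_transpose
      (∑ i ∈ Finset.range (N + 1), ∑ j ∈ Finset.range (N + 1),
        lam ^ ((j : ℤ) - (i : ℤ)) • A i j)]
    congr 1
    rw [Matrix.transpose_sum]
    rw [Finset.sum_comm]
    refine Finset.sum_congr rfl fun i _ => ?_
    rw [Matrix.transpose_sum]
    refine Finset.sum_congr rfl fun j _ => ?_
    rw [Matrix.transpose_smul, hsym]
    congr 1
    rw [_root_.inv_zpow, ← _root_.zpow_neg, neg_sub]
  exact ⟨key, by rw [key]⟩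
end

section
/- Let B_0,…,B_N be complex d×d matrices with B_0 invertible, and let λ = (λ_1,…,λ_m) be a stable non-resonant vector of eigenvalues for B_0,…,B_N. Then there exists a constant C > 0 such that for every multi-index α ∈ ℕ^m with |α| ≥ 2, the matrix T(λ^α) is invertible and ‖T(λ^α)⁻¹‖ ≤ C. -/
open Finset

/-- `T(μ) = Σ_{i=0}^N μ^i B_i`. -/
noncomputable def linT {d : ℕ} (N : ℕ) (B : ℕ → Matrix (Fin d) (Fin d) ℂ) (μ : ℂ) :
    Matrix (Fin d) (Fin d) ℂ :=
  ∑ i ∈ Finset.range (N + 1), μ ^ i • B i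

/-- The characteristic polynomial `F(μ) = det T(μ)`. -/
noncomputable def charF {d : ℕ} (N : ℕ) (B : ℕ → Matrix (Fin d) (Fin d) ℂ) (μ : ℂ) : ℂ :=
  (linT N B μ).det

/-- `λ^α = λ₁^{α₁} ⋯ λ_m^{α_m}` for a multi-index `α ∈ ℕ^m`. -/
def mIdxPow {m : ℕ} (lam : Fin m → ℂ) (α : Fin m → ℕ) : ℂ :=
  ∏ j, lam j ^ α j

/-- `|α| = α₁ + ⋯ + α_m`. -/
def mIdxSize {m : ℕ} (α : Fin m → ℕ) : ℕ :=
  ∑ j, α j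

/-- `λ = (λ₁,…,λ_m)` is a stable non-resonant vector of eigenvalues for
`B_0,…,B_N` : each `|λ_j| < 1` with `F(λ_j) = 0`, and `F(λ^α) ≠ 0` for every
multi-index `α` with `|α| ≥ 2`. -/
def StableNonResonant {d m : ℕ} (N : ℕ) (B : ℕ → Matrix (Fin d) (Fin d) ℂ)
    (lam : Fin m → ℂ) : Prop :=
  (∀ j, ‖lam j‖ < 1 ∧ charF N B (lam j) = 0) ∧
  ∀ α : Fin m → ℕ, 2 ≤ mIdxSize α → charF N B (mIdxPow lam α) ≠ 0

/-- Operator norm of a complex matrix, acting by `mulVec` on `ℂ^d` with the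
sup norm. -/
noncomputable def matOpNorm {d : ℕ} (M : Matrix (Fin d) (Fin d) ℂ) : ℝ :=
  ‖LinearMap.toContinuousLinearMap (Matrix.mulVecLin M)‖

/-- If `B_0` is invertible and `λ` is a stable non-resonant
vector of eigenvalues for `B_0,…,B_N`, then there is `C > 0` such that for
every multi-index `α` with `|α| ≥ 2` the matrix `T(λ^α)` is invertible and
`‖T(λ^α)⁻¹‖ ≤ C`. -/
theorem uniform_bound_on_inverses {d m N : ℕ}
    (B : ℕ → Matrix (Fin d) (Fin d) ℂ) (hB0 : IsUnit (B 0))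
    (lam : Fin m → ℂ) (hlam : StableNonResonant N B lam) :
    ∃ C : ℝ, 0 < C ∧ ∀ α : Fin m → ℕ, 2 ≤ mIdxSize α →
      IsUnit (linT N B (mIdxPow lam α)) ∧
      matOpNorm (linT N B (mIdxPow lam α))⁻¹ ≤ C := by
  classical
  obtain ⟨hst, hnr⟩ := hlam
  -- continuity of μ ↦ T(μ)
  have hT : Continuous (linT N B) :=
    continuous_finset_sum _ fun i _ => (continuous_pow i).smul continuous_const
  have hF : Continuous (charF N B) := hT.matrix_det
  -- continuity of the operator norm as a function of the matrix
  have hNorm : Continuous fun M : Matrix (Fin d) (Fin d) ℂ => matOpNorm M := by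
    have hlin : Continuous fun M : Matrix (Fin d) (Fin d) ℂ =>
        LinearMap.toContinuousLinearMap (Matrix.mulVecLin M) := by
      have heq : (fun M : Matrix (Fin d) (Fin d) ℂ =>
          LinearMap.toContinuousLinearMap (Matrix.mulVecLin M)) =
          ((LinearMap.toContinuousLinearMap.toLinearMap.comp
            Matrix.toLin'.toLinearMap : Matrix (Fin d) (Fin d) ℂ →ₗ[ℂ] _) : _ → _) := rfl
      rw [heq]
      exact LinearMap.continuous_of_finiteDimensional _
    exact continuous_norm.comp hlin
  -- continuity of μ ↦ ‖T(μ)⁻¹‖ where F(μ) ≠ 0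
  have hgcont : ContinuousOn (fun μ => matOpNorm (linT N B μ)⁻¹)
      {μ : ℂ | charF N B μ ≠ 0} := by
    have heq : ∀ μ : ℂ, (linT N B μ)⁻¹ = (charF N B μ)⁻¹ • (linT N B μ).adjugate := by
      intro μ
      rw [Matrix.inv_def, Ring.inverse_eq_inv']
      rfl
    refine ContinuousOn.congr (f := fun μ =>
      matOpNorm ((charF N B μ)⁻¹ • (linT N B μ).adjugate)) ?_ fun μ _ => by rw [heq]
    exact hNorm.comp_continuousOn
      ((hF.continuousOn.inv₀ fun μ hμ => hμ).smul hT.matrix_adjugate.continuousOn)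
  -- F(0) ≠ 0
  have hT0 : linT N B 0 = B 0 := by
    unfold linT
    rw [Finset.sum_eq_single 0]
    · simp
    · intro i _ hi
      simp [zero_pow hi]
    · simp
  have hF0 : charF N B 0 ≠ 0 := by
    unfold charF
    rw [hT0]
    exact ((Matrix.isUnit_iff_isUnit_det _).mp hB0).ne_zero
  -- a small closed ball around 0 on which F does not vanish
  obtain ⟨r, hr0, hr⟩ : ∃ r > 0, ∀ μ ∈ Metric.closedBall (0 : ℂ) r, charF N B μ ≠ 0 := by
    have hmem : {z : ℂ | z ≠ 0} ∈ nhds (charF N B 0) := isOpen_ne.mem_nhds hF0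
    have hpre := hF.continuousAt (x := 0) hmem
    rcases Metric.mem_nhds_iff.mp hpre with ⟨ε, hε, hball⟩
    exact ⟨ε / 2, by positivity,
      fun μ hμ => hball (Metric.closedBall_subset_ball (by linarith) hμ)⟩
  -- bound on the closed ball
  obtain ⟨μ₀, hμ₀, hmax⟩ := (isCompact_closedBall (0 : ℂ) r).exists_isMaxOn
    ⟨0, Metric.mem_closedBall_self hr0.le⟩ (hgcont.mono fun μ hμ => hr μ hμ)
  set C1 := matOpNorm (linT N B μ₀)⁻¹ with hC1
  -- the sup of the |λ_j|
  set ρ : NNReal := Finset.univ.sup fun j => ‖lam j‖₊ with hρdef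
  have habsle : ∀ j, ‖lam j‖ ≤ (ρ : ℝ) := by
    intro j
    have h1 := Finset.le_sup (f := fun j => ‖lam j‖₊) (Finset.mem_univ j)
    calc ‖lam j‖ = ‖lam j‖ := rfl
      _ = ((‖lam j‖₊ : ℝ)) := (coe_nnnorm _).symm
      _ ≤ (ρ : ℝ) := NNReal.coe_le_coe.mpr h1
  have hρ1 : (ρ : ℝ) < 1 := by
    rw [show (1 : ℝ) = ((1 : NNReal) : ℝ) by norm_num, NNReal.coe_lt_coe]
    refine Finset.sup_lt_iff (by norm_num) |>.mpr fun j _ => ?_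
    rw [← NNReal.coe_lt_coe, coe_nnnorm, NNReal.coe_one]
    exact (hst j).1
  have habs : ∀ α : Fin m → ℕ, ‖mIdxPow lam α‖ ≤ (ρ : ℝ) ^ mIdxSize α := by
    intro α
    unfold mIdxPow mIdxSize
    rw [norm_prod, ← Finset.prod_pow_eq_pow_sum]
    refine Finset.prod_le_prod (fun j _ => by positivity) fun j _ => ?_
    rw [norm_pow]
    exact pow_le_pow_left₀ (norm_nonneg _) (habsle j) _
  obtain ⟨K, hK⟩ : ∃ K : ℕ, ((ρ : ℝ)) ^ K < r := exists_pow_lt_of_lt_one hr0 hρ1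
  -- the set of resonant values outside the ball is finite
  set W : Set ℂ :=
    {z : ℂ | r < ‖z‖ ∧ ∃ α, 2 ≤ mIdxSize α ∧ mIdxPow lam α = z} with hWdef
  have hWfin : W.Finite := by
    have hsub : W ⊆ mIdxPow lam '' (Set.pi Set.univ fun _ : Fin m => Set.Iic K) := by
      rintro z ⟨hz, α, hα2, rfl⟩
      refine ⟨α, fun j _ => ?_, rfl⟩
      simp only [Set.mem_Iic]
      by_contra h
      push_neg at h
      have hKle : K ≤ mIdxSize α :=
        h.le.trans (Finset.single_le_sum (fun i _ => Nat.zero_le _) (Finset.mem_univ j))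
      have h2 : (ρ : ℝ) ^ mIdxSize α ≤ (ρ : ℝ) ^ K :=
        pow_le_pow_of_le_one ρ.coe_nonneg hρ1.le hKle
      exact absurd ((habs α).trans (h2.trans hK.le)) (not_le.mpr hz)
    exact Set.Finite.subset ((Set.Finite.pi fun _ => Set.finite_Iic K).image _) hsub
  obtain ⟨C2, hC2⟩ := (hWfin.image fun z => matOpNorm (linT N B z)⁻¹).bddAbove
  refine ⟨max (max C1 C2) 1, lt_of_lt_of_le one_pos (le_max_right _ _), fun α hα => ?_⟩
  have hFα : charF N B (mIdxPow lam α) ≠ 0 := hnr α hα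
  have hUnit : IsUnit (linT N B (mIdxPow lam α)) :=
    (Matrix.isUnit_iff_isUnit_det _).mpr (isUnit_iff_ne_zero.mpr hFα)
  refine ⟨hUnit, ?_⟩
  rcases le_or_gt (‖mIdxPow lam α‖) r with hle | hlt
  · have hmem : mIdxPow lam α ∈ Metric.closedBall (0 : ℂ) r := by
      rw [Metric.mem_closedBall, dist_zero_right]
      exact hle
    exact (hmax hmem).trans ((le_max_left C1 C2).trans (le_max_left _ _))
  · have hzW : mIdxPow lam α ∈ W := ⟨hlt, α, hα, rfl⟩
    exact (hC2 ⟨_, hzW, rfl⟩).trans ((le_max_right C1 C2).trans (le_max_left _ _))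
end

section
/- Let B_0,…,B_N be complex d×d matrices and suppose the characteristic polynomial factors as F(μ) = μ^e g(μ), where e ∈ ℕ and g is a polynomial with g(0) ≠ 0. Let λ = (λ_1,…,λ_m) be a stable non-resonant vector of eigenvalues for B_0,…,B_N, none of whose entries is zero. Then there exists a constant C > 0 such that for every multi-index α ∈ ℕ^m with |α| ≥ 2, the matrix T(λ^α) is invertible and ‖T(λ^α)⁻¹‖ ≤ C |λ^α|^{−e}. -/
open Finset

lemma matOpNorm_nonneg {d : ℕ} (M : Matrix (Fin d) (Fin d) ℂ) : 0 ≤ matOpNorm M :=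
  norm_nonneg _

lemma matOpNorm_smul {d : ℕ} (r : ℂ) (M : Matrix (Fin d) (Fin d) ℂ) :
    matOpNorm (r • M) = ‖r‖ * matOpNorm M := by
  unfold matOpNorm
  rw [show Matrix.mulVecLin (r • M) = r • Matrix.mulVecLin M from
    map_smul Matrix.toLin'.toLinearMap r M, map_smul]
  exact (norm_smul r (LinearMap.toContinuousLinearMap (Matrix.mulVecLin M))).trans
    rfl

lemma matOpNorm_continuous {d : ℕ} :
    Continuous fun M : Matrix (Fin d) (Fin d) ℂ => matOpNorm M := by
  have : Continuous fun M : Matrix (Fin d) (Fin d) ℂ =>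
      LinearMap.toContinuousLinearMap (Matrix.mulVecLin M) :=
    (LinearMap.toContinuousLinearMap.toLinearMap.comp
      (Matrix.toLin' : Matrix (Fin d) (Fin d) ℂ ≃ₗ[ℂ] _).toLinearMap).continuous_of_finiteDimensional
  exact this.norm

lemma linT_continuous {d : ℕ} (N : ℕ) (B : ℕ → Matrix (Fin d) (Fin d) ℂ) :
    Continuous fun μ : ℂ => linT N B μ := by
  unfold linT
  exact continuous_finset_sum _ fun i _ => ((continuous_pow i).smul continuous_const)

/-- Singular case: if the characteristic polynomial factors
as `F(μ) = μ^e g(μ)` with `g(0) ≠ 0`, and `λ` is a stable non-resonant vector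
of eigenvalues with nonzero entries, then there is `C > 0` such that for every
multi-index `α` with `|α| ≥ 2`, `T(λ^α)` is invertible and
`‖T(λ^α)⁻¹‖ ≤ C |λ^α|^{-e}`. -/
theorem singular_bound_on_inverses {d m N : ℕ}
    (B : ℕ → Matrix (Fin d) (Fin d) ℂ)
    (e : ℕ) (g : Polynomial ℂ) (hg0 : g.eval 0 ≠ 0)
    (hfac : ∀ μ : ℂ, charF N B μ = μ ^ e * g.eval μ)
    (lam : Fin m → ℂ) (hlam : StableNonResonant N B lam)
    (hne : ∀ j, lam j ≠ 0) :
    ∃ C : ℝ, 0 < C ∧ ∀ α : Fin m → ℕ, 2 ≤ mIdxSize α →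
      IsUnit (linT N B (mIdxPow lam α)) ∧
      matOpNorm (linT N B (mIdxPow lam α))⁻¹ ≤ C * (‖mIdxPow lam α‖ ^ e)⁻¹ := by
  classical
  set f : ℂ → ℝ := fun μ => matOpNorm (Matrix.adjugate (linT N B μ)) with hf
  have hfc : Continuous f := matOpNorm_continuous.comp ((linT_continuous N B).matrix_adjugate)
  obtain ⟨μ₀, hμ₀, hK'⟩ := (isCompact_closedBall (0 : ℂ) 1).exists_isMaxOn
    ⟨0, Metric.mem_closedBall_self zero_le_one⟩ hfc.continuousOn
  have hK : ∀ μ ∈ Metric.closedBall (0 : ℂ) 1, f μ ≤ f μ₀ := fun μ hμ => hK' hμ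
  set K : ℝ := f μ₀ with hKdef
  have hK0 : 0 ≤ K := matOpNorm_nonneg _
  -- find δ such that |g(μ)| > |g 0|/2 within δ of 0
  have hg0pos : 0 < ‖g.eval 0‖ / 2 := by
    have := norm_pos_iff.mpr hg0
    linarith
  have hgc : Continuous fun μ : ℂ => ‖g.eval μ‖ :=
    continuous_norm.comp g.continuous
  have hev : ∀ᶠ μ : ℂ in nhds 0, ‖g.eval 0‖ / 2 < ‖g.eval μ‖ := by
    have h0 : ‖g.eval 0‖ / 2 < ‖g.eval 0‖ := by
      linarith [norm_pos_iff.mpr hg0]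
    exact hgc.continuousAt (Ioi_mem_nhds h0)
  obtain ⟨δ, hδpos, hδ⟩ := Metric.eventually_nhds_iff_ball.mp hev
  -- per-coordinate cutoffs
  have hnj : ∀ j : Fin m, ∃ n : ℕ, ‖lam j‖ ^ n < δ := fun j =>
    exists_pow_lt_of_lt_one hδpos (hlam.1 j).1
  choose n hn using hnj
  set s : Finset (Fin m → ℕ) := Fintype.piFinset fun j => Finset.range (n j) with hs
  set sf : Finset (Fin m → ℕ) := s.filter fun α => 2 ≤ mIdxSize α with hsf
  set vals : Finset ℝ :=
    insert (‖g.eval 0‖ / 2)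
      (sf.image fun α => ‖g.eval (mIdxPow lam α)‖) with hvals
  have hvne : vals.Nonempty := insert_nonempty _ _
  set c : ℝ := vals.min' hvne with hc
  -- facts about |λ^α|
  have habs : ∀ α : Fin m → ℕ, ‖mIdxPow lam α‖
      = ∏ j, ‖lam j‖ ^ α j := by
    intro α
    unfold mIdxPow
    rw [norm_prod]
    exact Finset.prod_congr rfl fun j _ => norm_pow _ _
  have habs_le_one : ∀ α : Fin m → ℕ, ‖mIdxPow lam α‖ ≤ 1 := by
    intro α
    rw [habs]
    refine Finset.prod_le_one (fun j _ => by positivity) fun j _ =>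
      pow_le_one₀ (norm_nonneg _) (le_of_lt (hlam.1 j).1)
  have hgne : ∀ α : Fin m → ℕ, 2 ≤ mIdxSize α → g.eval (mIdxPow lam α) ≠ 0 := by
    intro α hα hcon
    exact hlam.2 α hα (by rw [hfac, hcon, mul_zero])
  have hcpos : 0 < c := by
    rw [hc, Finset.lt_min'_iff]
    intro y hy
    rcases Finset.mem_insert.mp hy with h | h
    · rw [h]; exact hg0pos
    · obtain ⟨α, hα, rfl⟩ := Finset.mem_image.mp h
      exact norm_pos_iff.mpr (hgne α (Finset.mem_filter.mp hα).2)
  have hcle : ∀ α : Fin m → ℕ, 2 ≤ mIdxSize α →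
      c ≤ ‖g.eval (mIdxPow lam α)‖ := by
    intro α hα
    by_cases hmem : α ∈ s
    · refine Finset.min'_le _ _ ?_
      exact Finset.mem_insert_of_mem (Finset.mem_image.mpr
        ⟨α, Finset.mem_filter.mpr ⟨hmem, hα⟩, rfl⟩)
    · -- some coordinate is large, so |λ^α| < δ
      rw [hs, Fintype.mem_piFinset] at hmem
      push_neg at hmem
      obtain ⟨j, hj⟩ := hmem
      rw [Finset.mem_range, not_lt] at hj
      have h1 : ‖mIdxPow lam α‖ ≤ ‖lam j‖ ^ α j := by
        rw [habs, ← Finset.mul_prod_erase Finset.univ _ (Finset.mem_univ j)]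
        have h2 : ∏ i ∈ Finset.univ.erase j, ‖lam i‖ ^ α i ≤ 1 :=
          Finset.prod_le_one (fun i _ => by positivity) fun i _ =>
            pow_le_one₀ (norm_nonneg _) (le_of_lt (hlam.1 i).1)
        calc ‖lam j‖ ^ α j * ∏ i ∈ Finset.univ.erase j,
              ‖lam i‖ ^ α i
            ≤ ‖lam j‖ ^ α j * 1 := by
              exact mul_le_mul_of_nonneg_left h2 (by positivity)
          _ = ‖lam j‖ ^ α j := mul_one _
      have h3 : ‖lam j‖ ^ α j ≤ ‖lam j‖ ^ n j :=
        pow_le_pow_of_le_one (norm_nonneg _) (le_of_lt (hlam.1 j).1) hj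
      have hsmall : ‖mIdxPow lam α‖ < δ := lt_of_le_of_lt (h1.trans h3) (hn j)
      have := hδ (y := mIdxPow lam α) (by
        rw [Metric.mem_ball, dist_zero_right]; exact hsmall)
      have hc2 : c ≤ ‖g.eval 0‖ / 2 :=
        Finset.min'_le _ _ (Finset.mem_insert_self _ _)
      linarith
  -- the constant
  refine ⟨(K + 1) / c, by positivity, fun α hα => ?_⟩
  set μ : ℂ := mIdxPow lam α with hμ
  have hμne : μ ≠ 0 := by
    rw [hμ]
    unfold mIdxPow
    exact Finset.prod_ne_zero_iff.mpr fun j _ => pow_ne_zero _ (hne j)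
  have hdet : (linT N B μ).det ≠ 0 := hlam.2 α hα
  have hunit : IsUnit (linT N B μ) :=
    (Matrix.isUnit_iff_isUnit_det _).mpr (isUnit_iff_ne_zero.mpr hdet)
  refine ⟨hunit, ?_⟩
  have hdetval : ‖(linT N B μ).det‖
      = ‖μ‖ ^ e * ‖g.eval μ‖ := by
    have : (linT N B μ).det = μ ^ e * g.eval μ := hfac μ
    rw [this, norm_mul, norm_pow]
  have hμabs_pos : 0 < ‖μ‖ := norm_pos_iff.mpr hμne
  have hgabs_pos : 0 < ‖g.eval μ‖ := norm_pos_iff.mpr (hgne α hα)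
  -- inverse formula
  have hinv : (linT N B μ)⁻¹ = ((linT N B μ).det)⁻¹ • Matrix.adjugate (linT N B μ) := by
    rw [Matrix.inv_def, Ring.inverse_eq_inv]
  rw [hinv, matOpNorm_smul, norm_inv, hdetval]
  have hfK : f μ ≤ K := hK μ (by
    rw [Metric.mem_closedBall, dist_zero_right]
    exact habs_le_one α)
  have hf0 : 0 ≤ f μ := matOpNorm_nonneg _
  have key : (‖g.eval μ‖)⁻¹ * f μ ≤ (K + 1) / c := by
    rw [div_eq_inv_mul]
    refine mul_le_mul ?_ (by linarith) hf0 (by positivity)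
    exact inv_anti₀ hcpos (hcle α hα)
  calc (‖μ‖ ^ e * ‖g.eval μ‖)⁻¹ * f μ
      = ((‖g.eval μ‖)⁻¹ * f μ) * (‖μ‖ ^ e)⁻¹ := by
        rw [mul_inv]; ring
    _ ≤ (K + 1) / c * (‖μ‖ ^ e)⁻¹ :=
        mul_le_mul_of_nonneg_right key (by positivity)
end

section
/- Let D ⊂ ℝ^m be the closed ball of radius ρ > 0 centered at the origin, let Λ be an m×m real matrix, let B_0,…,B_N be real d×d matrices with B_0 invertible, and let r ≥ 1 be an integer. Suppose there is μ with 0 < μ < 1 and ‖Λ‖^r ≤ μ. Then for every C^r map φ : ℝ^m → ℝ^d, the map L(φ) := Σ_{j=1}^N B_0⁻¹ B_j · (φ ∘ Λ^j) satisfies sup_{x ∈ D} ‖D^r(L(φ))(x)‖ ≤ (Σ_{j=1}^N μ^j ‖B_0⁻¹ B_j‖) · sup_{x ∈ D} ‖D^r φ(x)‖, where D^r denotes the r-th Fréchet derivative and the operator norm on symmetric r-linear maps is used. In particular, if Σ_{j=1}^N μ^j ‖B_0⁻¹ B_j‖ < 1, then L is a contraction with respect to the seminorm φ ↦ sup_{x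 ∈ D} ‖D^r φ(x)‖. -/
open Finset

/-- Operator norm of a real matrix, acting by `mulVec` on `ℝ^n` with the
sup norm. -/
noncomputable def matOpNormR {n p : ℕ} (M : Matrix (Fin n) (Fin p) ℝ) : ℝ :=
  ‖LinearMap.toContinuousLinearMap (Matrix.mulVecLin M)‖

/-- The `C^r` seminorm `φ ↦ sup_{x ∈ D} ‖D^r φ(x)‖` on the closed ball `D` of
radius `ρ`. -/
noncomputable def crSeminorm {m d : ℕ} (ρ : ℝ) (r : ℕ)
    (φ : (Fin m → ℝ) → (Fin d → ℝ)) : ℝ :=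
  ⨆ x : Metric.closedBall (0 : Fin m → ℝ) ρ, ‖iteratedFDeriv ℝ r φ x‖

noncomputable def toCLM {n p : ℕ} (M : Matrix (Fin n) (Fin p) ℝ) :
    (Fin p → ℝ) →L[ℝ] (Fin n → ℝ) :=
  LinearMap.toContinuousLinearMap (Matrix.mulVecLin M)

lemma toCLM_apply {n p : ℕ} (M : Matrix (Fin n) (Fin p) ℝ) (x : Fin p → ℝ) :
    toCLM M x = M.mulVec x := rfl

lemma matOpNormR_eq {n p : ℕ} (M : Matrix (Fin n) (Fin p) ℝ) :
    matOpNormR M = ‖toCLM M‖ := rfl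

lemma matOpNormR_nonneg {n p : ℕ} (M : Matrix (Fin n) (Fin p) ℝ) :
    0 ≤ matOpNormR M := norm_nonneg _

lemma norm_mulVec_le {n p : ℕ} (M : Matrix (Fin n) (Fin p) ℝ) (x : Fin p → ℝ) :
    ‖M.mulVec x‖ ≤ matOpNormR M * ‖x‖ := by
  rw [← toCLM_apply, matOpNormR_eq]; exact (toCLM M).le_opNorm x

lemma matOpNormR_pow_le {n : ℕ} (M : Matrix (Fin n) (Fin n) ℝ) (j : ℕ) :
    matOpNormR (M ^ j) ≤ matOpNormR M ^ j := by
  induction j with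
  | zero =>
    rw [pow_zero, pow_zero, matOpNormR_eq]
    apply ContinuousLinearMap.opNorm_le_bound _ zero_le_one
    intro x
    simp [toCLM_apply, Matrix.one_mulVec]
  | succ j ih =>
    rw [matOpNormR_eq]
    apply ContinuousLinearMap.opNorm_le_bound _ (by have := matOpNormR_nonneg M; positivity)
    intro x
    rw [toCLM_apply, pow_succ, ← Matrix.mulVec_mulVec]
    calc ‖(M ^ j).mulVec (M.mulVec x)‖ ≤ matOpNormR (M ^ j) * ‖M.mulVec x‖ :=
          norm_mulVec_le _ _
      _ ≤ matOpNormR M ^ j * (matOpNormR M * ‖x‖) := by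
          apply mul_le_mul ih (norm_mulVec_le _ _) (norm_nonneg _) (by have := matOpNormR_nonneg M; positivity)
      _ = matOpNormR M ^ (j + 1) * ‖x‖ := by ring

lemma core_estimate {m d N : ℕ} (ρ : ℝ) (hρ : 0 < ρ) (Λ : Matrix (Fin m) (Fin m) ℝ)
    (C : ℕ → Matrix (Fin d) (Fin d) ℝ) (r : ℕ) (hr : 1 ≤ r)
    (μ : ℝ) (hμ0 : 0 < μ) (hμ1 : μ < 1) (hΛ : matOpNormR Λ ^ r ≤ μ)
    (φ : (Fin m → ℝ) → (Fin d → ℝ)) (hφ : ContDiff ℝ r φ) :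
    crSeminorm ρ r (fun x => ∑ j ∈ Finset.Icc 1 N, (C j).mulVec (φ ((Λ ^ j).mulVec x))) ≤
      (∑ j ∈ Finset.Icc 1 N, μ ^ j * matOpNormR (C j)) * crSeminorm ρ r φ := by
  set b := matOpNormR Λ with hb
  have hb0 : 0 ≤ b := matOpNormR_nonneg Λ
  have hΛ1 : b ≤ 1 := by
    by_contra h
    push_neg at h
    have h1 : (1 : ℝ) ≤ b ^ r := one_le_pow₀ h.le
    linarith
  -- membership of images
  have hmem : ∀ j : ℕ, ∀ x : Fin m → ℝ, x ∈ Metric.closedBall (0 : Fin m → ℝ) ρ →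
      (Λ ^ j).mulVec x ∈ Metric.closedBall (0 : Fin m → ℝ) ρ := by
    intro j x hx
    rw [mem_closedBall_zero_iff] at hx ⊢
    calc ‖(Λ ^ j).mulVec x‖ ≤ matOpNormR (Λ ^ j) * ‖x‖ := norm_mulVec_le _ _
      _ ≤ b ^ j * ρ := mul_le_mul (matOpNormR_pow_le Λ j) hx (norm_nonneg _) (by positivity)
      _ ≤ 1 * ρ := by
          apply mul_le_mul_of_nonneg_right (pow_le_one₀ hb0 hΛ1) hρ.le
      _ = ρ := one_mul ρ
  -- boundedness of the sup for φ
  have hc : Continuous fun x => ‖iteratedFDeriv ℝ r φ x‖ :=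
    (hφ.continuous_iteratedFDeriv le_rfl).norm
  have hbdd : BddAbove (Set.range fun x : Metric.closedBall (0 : Fin m → ℝ) ρ =>
      ‖iteratedFDeriv ℝ r φ ↑x‖) := by
    have := ((isCompact_closedBall (0 : Fin m → ℝ) ρ).image hc).bddAbove
    rwa [Set.image_eq_range] at this
  have hsem : ∀ y ∈ Metric.closedBall (0 : Fin m → ℝ) ρ,
      ‖iteratedFDeriv ℝ r φ y‖ ≤ crSeminorm ρ r φ := fun y hy =>
    le_ciSup hbdd (⟨y, hy⟩ : Metric.closedBall (0 : Fin m → ℝ) ρ)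
  have hsem0 : 0 ≤ crSeminorm ρ r φ :=
    le_trans (norm_nonneg _) (hsem 0 (Metric.mem_closedBall_self hρ.le))
  set f : ℕ → (Fin m → ℝ) → (Fin d → ℝ) :=
    fun j x => (C j).mulVec (φ ((Λ ^ j).mulVec x)) with hf
  have hfc : ∀ j ∈ Finset.Icc 1 N, ContDiff ℝ (r : ℕ∞) (f j) := by
    intro j _
    exact (toCLM (C j)).contDiff.comp (hφ.comp (toCLM (Λ ^ j)).contDiff)
  -- pointwise derivative bound
  have key : ∀ j, ∀ x : Fin m → ℝ,
      ‖iteratedFDeriv ℝ r (f j) x‖ ≤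
        matOpNormR (C j) * (b ^ r) ^ j * ‖iteratedFDeriv ℝ r φ ((Λ ^ j).mulVec x)‖ := by
    intro j x
    have hcomp : f j = (toCLM (C j)) ∘ (φ ∘ (toCLM (Λ ^ j))) := rfl
    rw [hcomp, (toCLM (C j)).iteratedFDeriv_comp_left
      ((hφ.comp (toCLM (Λ ^ j)).contDiff).contDiffAt (x := x)) le_rfl]
    refine le_trans (ContinuousLinearMap.norm_compContinuousMultilinearMap_le _ _) ?_
    rw [(toCLM (Λ ^ j)).iteratedFDeriv_comp_right hφ x le_rfl]
    refine le_trans (mul_le_mul_of_nonneg_left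
      (ContinuousMultilinearMap.norm_compContinuousLinearMap_le _ _) (norm_nonneg _)) ?_
    have hprod : (∏ _i : Fin r, ‖toCLM (Λ ^ j)‖) = matOpNormR (Λ ^ j) ^ r := by
      simp [matOpNormR_eq]
    rw [hprod]
    have h1 : matOpNormR (Λ ^ j) ^ r ≤ (b ^ r) ^ j := by
      calc matOpNormR (Λ ^ j) ^ r ≤ (b ^ j) ^ r :=
            pow_le_pow_left₀ (matOpNormR_nonneg _) (matOpNormR_pow_le Λ j) r
        _ = (b ^ r) ^ j := by rw [← pow_mul, ← pow_mul, Nat.mul_comm]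
    have hCn : 0 ≤ matOpNormR (C j) := matOpNormR_nonneg _
    set n := ‖iteratedFDeriv ℝ r φ (toCLM (Λ ^ j) x)‖ with hn
    have hn0 : 0 ≤ n := norm_nonneg _
    calc matOpNormR (C j) * (n * matOpNormR (Λ ^ j) ^ r)
        ≤ matOpNormR (C j) * (n * (b ^ r) ^ j) := by
          apply mul_le_mul_of_nonneg_left (mul_le_mul_of_nonneg_left h1 hn0) hCn
      _ = matOpNormR (C j) * (b ^ r) ^ j * n := by ring
  -- now the sup estimate
  have hne : Nonempty (Metric.closedBall (0 : Fin m → ℝ) ρ) :=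
    ⟨⟨0, Metric.mem_closedBall_self hρ.le⟩⟩
  unfold crSeminorm
  apply ciSup_le
  rintro ⟨x, hx⟩
  have hxder : iteratedFDeriv ℝ r (fun y => ∑ j ∈ Finset.Icc 1 N, f j y) x =
      ∑ j ∈ Finset.Icc 1 N, iteratedFDeriv ℝ r (f j) x := by
    have h := congrFun (iteratedFDeriv_sum hfc) x
    simpa using h
  calc ‖iteratedFDeriv ℝ r (fun y => ∑ j ∈ Finset.Icc 1 N, f j y) x‖
      = ‖∑ j ∈ Finset.Icc 1 N, iteratedFDeriv ℝ r (f j) x‖ := by rw [hxder]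
    _ ≤ ∑ j ∈ Finset.Icc 1 N, ‖iteratedFDeriv ℝ r (f j) x‖ := norm_sum_le _ _
    _ ≤ ∑ j ∈ Finset.Icc 1 N, μ ^ j * matOpNormR (C j) * crSeminorm ρ r φ := by
        apply Finset.sum_le_sum
        intro j _
        have h2 : ‖iteratedFDeriv ℝ r φ ((Λ ^ j).mulVec x)‖ ≤ crSeminorm ρ r φ :=
          hsem _ (hmem j x hx)
        have h3 : (b ^ r) ^ j ≤ μ ^ j := pow_le_pow_left₀ (by positivity) hΛ j
        have hCn : 0 ≤ matOpNormR (C j) := matOpNormR_nonneg _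
        calc ‖iteratedFDeriv ℝ r (f j) x‖
            ≤ matOpNormR (C j) * (b ^ r) ^ j * ‖iteratedFDeriv ℝ r φ ((Λ ^ j).mulVec x)‖ :=
              key j x
          _ ≤ matOpNormR (C j) * μ ^ j * crSeminorm ρ r φ := by
              apply mul_le_mul (mul_le_mul_of_nonneg_left h3 hCn) h2 (norm_nonneg _)
              positivity
          _ = μ ^ j * matOpNormR (C j) * crSeminorm ρ r φ := by ring
    _ = (∑ j ∈ Finset.Icc 1 N, μ ^ j * matOpNormR (C j)) * crSeminorm ρ r φ :=
        (Finset.sum_mul _ _ _).symm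

/-- The contraction estimate for
`L(φ) = Σ_{j=1}^N B₀⁻¹ B_j (φ ∘ Λ^j)` : if `0 < μ < 1` and `‖Λ‖^r ≤ μ`, then
for every `C^r` map `φ`, `sup_D ‖D^r(Lφ)‖ ≤ (Σ_{j=1}^N μ^j ‖B₀⁻¹B_j‖) sup_D ‖D^r φ‖`;
in particular if `Σ_{j=1}^N μ^j ‖B₀⁻¹B_j‖ < 1` then `L` is a contraction for
this seminorm. -/
theorem contraction_estimate_Cr {m d N : ℕ} (ρ : ℝ) (hρ : 0 < ρ)
    (Λ : Matrix (Fin m) (Fin m) ℝ)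
    (B : ℕ → Matrix (Fin d) (Fin d) ℝ) (hB0 : IsUnit (B 0))
    (r : ℕ) (hr : 1 ≤ r)
    (μ : ℝ) (hμ0 : 0 < μ) (hμ1 : μ < 1) (hΛ : matOpNormR Λ ^ r ≤ μ)
    (L : ((Fin m → ℝ) → (Fin d → ℝ)) → ((Fin m → ℝ) → (Fin d → ℝ)))
    (hL : ∀ φ x, L φ x =
      ∑ j ∈ Finset.Icc 1 N, ((B 0)⁻¹ * B j).mulVec (φ ((Λ ^ j).mulVec x))) :
    (∀ φ : (Fin m → ℝ) → (Fin d → ℝ), ContDiff ℝ r φ →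
      crSeminorm ρ r (L φ) ≤
        (∑ j ∈ Finset.Icc 1 N, μ ^ j * matOpNormR ((B 0)⁻¹ * B j)) *
          crSeminorm ρ r φ) ∧
    ((∑ j ∈ Finset.Icc 1 N, μ ^ j * matOpNormR ((B 0)⁻¹ * B j)) < 1 →
      ∀ φ ψ : (Fin m → ℝ) → (Fin d → ℝ), ContDiff ℝ r φ → ContDiff ℝ r ψ →
        crSeminorm ρ r (fun x => L φ x - L ψ x) ≤
          (∑ j ∈ Finset.Icc 1 N, μ ^ j * matOpNormR ((B 0)⁻¹ * B j)) *
            crSeminorm ρ r (fun x => φ x - ψ x)) := by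
  constructor
  · intro φ hφ
    have hLφ : L φ = fun x => ∑ j ∈ Finset.Icc 1 N,
        ((B 0)⁻¹ * B j).mulVec (φ ((Λ ^ j).mulVec x)) := funext (hL φ)
    rw [hLφ]
    exact core_estimate ρ hρ Λ (fun j => (B 0)⁻¹ * B j) r hr μ hμ0 hμ1 hΛ φ hφ
  · intro _ φ ψ hφ hψ
    have hdiff : (fun x => L φ x - L ψ x) = fun x => ∑ j ∈ Finset.Icc 1 N,
        ((B 0)⁻¹ * B j).mulVec ((fun y => φ y - ψ y) ((Λ ^ j).mulVec x)) := by
      funext x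
      rw [hL, hL, ← Finset.sum_sub_distrib]
      exact Finset.sum_congr rfl fun j _ => (Matrix.mulVec_sub _ _ _).symm
    rw [hdiff]
    exact core_estimate ρ hρ Λ (fun j => (B 0)⁻¹ * B j) r hr μ hμ0 hμ1 hΛ (fun y => φ y - ψ y) (hφ.sub hψ)
end

section
/- Let η > 0 and set λ = e^{−η}. Define P : ℝ → ℝ by P(z) = 2 sinh(η) z / (z² + 1). Then for every z ∈ ℝ, P(λ² z) + P(z) = 2 cosh(η) P(λz) / (P(λz)² + 1). -/
/-- The McMillan map parameterized stable solution:
with `λ = e^{-η}` and `P(z) = 2 sinh(η) z / (z² + 1)`, one has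
`P(λ² z) + P(z) = 2 cosh(η) P(λz) / (P(λz)² + 1)` for all real `z`. -/
theorem mcmillan_parameterization (η : ℝ) (hη : 0 < η)
    (lam : ℝ) (hlam : lam = Real.exp (-η))
    (P : ℝ → ℝ) (hP : ∀ z : ℝ, P z = 2 * Real.sinh η * z / (z ^ 2 + 1)) :
    ∀ z : ℝ,
      P (lam ^ 2 * z) + P z = 2 * Real.cosh η * P (lam * z) / ((P (lam * z)) ^ 2 + 1) := by
  intro z
  have he : Real.exp η ≠ 0 := (Real.exp_pos η).ne'
  have h1 : (z ^ 2 + 1) ≠ 0 := by positivity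
  have h2 : ((lam * z) ^ 2 + 1) ≠ 0 := by positivity
  have h3 : ((lam ^ 2 * z) ^ 2 + 1) ≠ 0 := by positivity
  have hPl : (P (lam * z)) ^ 2 + 1 ≠ 0 := by positivity
  simp only [hP] at hPl ⊢
  simp only [hlam, Real.exp_neg, Real.sinh_eq, Real.cosh_eq, Real.exp_neg] at *
  field_simp at *
  ring_nf
end

section
/- Let f(θ) = 2θ/(1−θ), defined for θ < 1, and P(z) = z/(1−z). Then for every z ∈ (−1/2, 1/2): (i) f(P(z/2)) = P(z); and (ii) Z(P(z), P(z/2), P(z/4)) = 0, where Z(θ_0, θ_1, θ_2) = (f(θ_1) − θ_0) f'(θ_1) + (θ_1 − f(θ_2)). -/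
lemma key (z : ℝ) (h1 : z < 1) (h2 : -1 < z) :
    (2 * (z / 2 / (1 - z / 2)) / (1 - z / 2 / (1 - z / 2))) = z / (1 - z) := by
  have hz2 : (1 : ℝ) - z / 2 ≠ 0 := by nlinarith
  have hz : (1 : ℝ) - z ≠ 0 := by nlinarith
  have hz2' : (2 : ℝ) - z ≠ 0 := by nlinarith
  have h3 : 1 - z / 2 / (1 - z / 2) = (1 - z) / (1 - z / 2) := by
    field_simp
    ring
  rw [h3, div_eq_div_iff (by positivity) hz]
  field_simp

/-- With `f(θ) = 2θ/(1-θ)` and `P(z) = z/(1-z)`, for every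
`z ∈ (-1/2, 1/2)` one has `f(P(z/2)) = P(z)` and
`Z(P(z), P(z/2), P(z/4)) = 0` where
`Z(θ₀,θ₁,θ₂) = (f(θ₁) − θ₀) f'(θ₁) + (θ₁ − f(θ₂))`. -/
theorem parameterized_solution_non_dynamical
    (f : ℝ → ℝ) (hf : ∀ θ : ℝ, f θ = 2 * θ / (1 - θ))
    (P : ℝ → ℝ) (hP : ∀ z : ℝ, P z = z / (1 - z))
    (Z : ℝ → ℝ → ℝ → ℝ)
    (hZ : ∀ θ₀ θ₁ θ₂ : ℝ, Z θ₀ θ₁ θ₂ = (f θ₁ - θ₀) * deriv f θ₁ + (θ₁ - f θ₂)) :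
    ∀ z : ℝ, -(1/2 : ℝ) < z → z < 1/2 →
      f (P (z / 2)) = P z ∧ Z (P z) (P (z / 2)) (P (z / 4)) = 0 := by
  intro z hl hr
  have h1 : f (P (z / 2)) = P z := by
    rw [hf, hP, hP]; exact key z (by linarith) (by linarith)
  have h2 : f (P (z / 4)) = P (z / 2) := by
    rw [hf, hP, hP]
    have : z / 4 = (z / 2) / 2 := by ring
    rw [this]
    exact key (z / 2) (by linarith) (by linarith)
  refine ⟨h1, ?_⟩
  rw [hZ, h1, h2]
  ring
end
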